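/- Let 2 ≤ u ≤ d, k = d + u ≤ n with (d+u)²/u ≤ n, and set α = k·ln(e·n/k) + u·ln(e·k/u). For any positive integer z, there exists an h × n (n, d, u; z]-disjunct matrix with h ≤ 3(1 + 4z/(3α)) · (k/u)^u · (k/d)^d · α. -/

import Mathlib

/-- A `h × n` binary matrix `M` is `(n, d, u; z]`-disjunct. -/
def IsDisjunct {t n : ℕ} (M : Fin t → Fin n → Bool) (d u z : ℕ) : Prop :=
  ∀ S₁ S₂ : Finset (Fin n), Disjoint S₁ S₂ → S₁.card = d → S₂.card = u →
    z ≤ (Finset.univ.filter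
      (fun i => (∀ j ∈ S₂, M i j = true) ∧ (∀ j ∈ S₁, M i j = false))).card

/-- `α = k·ln(e·n/k) + u·ln(e·k/u)` with `k = d + u`. -/
noncomputable def alphaTGT (n d u : ℕ) : ℝ :=
  ((d : ℝ) + u) * Real.log (Real.exp 1 * n / ((d : ℝ) + u)) +
    (u : ℝ) * Real.log (Real.exp 1 * ((d : ℝ) + u) / u)

open Finset


section Counting

variable {n : ℕ} (p : ℝ)

noncomputable def rowW (r : Fin n → Bool) : ℝ := ∏ j, if r j then p else 1 - p

def RowOK (S₁ S₂ : Finset (Fin n)) (r : Fin n → Bool) : Prop :=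
  (∀ j ∈ S₂, r j = true) ∧ (∀ j ∈ S₁, r j = false)

instance (S₁ S₂ : Finset (Fin n)) : DecidablePred (RowOK S₁ S₂) := fun _ =>
  instDecidableAnd

lemma indep_prod {ι κ : Type*} [Fintype ι] [DecidableEq ι] [Fintype κ] [DecidableEq κ]
    (F : κ → ℝ) (P : ι → κ → Prop) [∀ i, DecidablePred (P i)] :
    ∑ f : ι → κ, (if ∀ i, P i (f i) then ∏ i, F (f i) else 0)
      = ∏ i, ∑ x ∈ univ.filter (P i), F x := by
  rw [Finset.prod_univ_sum]
  have h1 : ∀ f : ι → κ,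
      (if ∀ i, P i (f i) then ∏ i, F (f i) else 0)
        = (if f ∈ Fintype.piFinset (fun i => univ.filter (P i)) then ∏ i, F (f i) else 0) := by
    intro f
    apply if_congr _ rfl rfl
    simp [Fintype.mem_piFinset]
  rw [Finset.sum_congr rfl (fun f _ => h1 f)]
  rw [Finset.sum_ite_mem]
  rw [Finset.univ_inter]

lemma sum_pos_part (q : ℝ) {ι : Type*} [Fintype ι] [DecidableEq ι] : True := trivial

end Counting

section Counting2

variable {n : ℕ} (p : ℝ)

lemma sum_rowW_total' : ∑ r : Fin n → Bool, rowW p r = 1 := by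
  have h := indep_prod (ι := Fin n) (κ := Bool)
    (fun b => if b = true then p else 1 - p) (fun _ _ => True)
  simp only [if_true, forall_const, Finset.filter_true] at h
  have h2 : ∀ j : Fin n, (∑ x : Bool, (if x = true then p else 1 - p)) = 1 := by
    intro j; simp
  calc ∑ r : Fin n → Bool, rowW p r
      = ∑ r : Fin n → Bool, ∏ j, (if r j = true then p else 1 - p) := rfl
    _ = ∏ j : Fin n, ∑ x : Bool, (if x = true then p else 1 - p) := by
        rw [← h]; apply Finset.sum_congr rfl; intros; simp
    _ = 1 := by rw [Finset.prod_congr rfl (fun j _ => h2 j), Finset.prod_const_one]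

lemma sum_rowW_ok (S₁ S₂ : Finset (Fin n)) (hdisj : Disjoint S₁ S₂) :
    ∑ r : Fin n → Bool, (if RowOK S₁ S₂ r then rowW p r else 0)
      = p ^ S₂.card * (1 - p) ^ S₁.card := by
  have h := indep_prod (ι := Fin n) (κ := Bool)
    (fun b => if b = true then p else 1 - p)
    (fun j b => (j ∈ S₂ → b = true) ∧ (j ∈ S₁ → b = false))
  have hiff : ∀ r : Fin n → Bool,
      (∀ j, (j ∈ S₂ → r j = true) ∧ (j ∈ S₁ → r j = false)) ↔ RowOK S₁ S₂ r := by
    intro r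
    constructor
    · intro hr; exact ⟨fun j hj => (hr j).1 hj, fun j hj => (hr j).2 hj⟩
    · intro hr j; exact ⟨fun hj => hr.1 j hj, fun hj => hr.2 j hj⟩
  have hval : ∀ j : Fin n,
      (∑ x ∈ univ.filter (fun b => (j ∈ S₂ → b = true) ∧ (j ∈ S₁ → b = false)),
        (if x = true then p else 1 - p))
      = (if j ∈ S₂ then p else if j ∈ S₁ then 1 - p else 1) := by
    intro j
    rw [Finset.sum_filter]
    by_cases h2 : j ∈ S₂
    · have h1 : j ∉ S₁ := fun h1 => (Finset.disjoint_left.mp hdisj h1 h2)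
      simp [h2, h1]
    · by_cases h1 : j ∈ S₁
      · simp [h2, h1]
      · simp [h2, h1]; try ring
  calc ∑ r : Fin n → Bool, (if RowOK S₁ S₂ r then rowW p r else 0)
      = ∑ r : Fin n → Bool,
          (if (∀ j, (j ∈ S₂ → r j = true) ∧ (j ∈ S₁ → r j = false))
            then ∏ j, (if r j = true then p else 1 - p) else 0) := by
        apply Finset.sum_congr rfl; intro r _
        apply if_congr (hiff r).symm rfl rfl
    _ = ∏ j : Fin n, (if j ∈ S₂ then p else if j ∈ S₁ then 1 - p else 1) := by
        rw [← Finset.prod_congr rfl (fun j (_ : j ∈ univ) => hval j), ← h]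
        apply Finset.sum_congr rfl; intro r _; congr
    _ = p ^ S₂.card * (1 - p) ^ S₁.card := by
        rw [← Finset.prod_mul_prod_compl S₂]
        have e1 : ∏ j ∈ S₂, (if j ∈ S₂ then p else if j ∈ S₁ then 1 - p else 1) = p ^ S₂.card := by
          rw [Finset.prod_congr rfl (fun j hj => if_pos hj), Finset.prod_const]
        have hsub : S₁ ⊆ S₂ᶜ := fun j hj => by
          simp only [Finset.mem_compl]
          exact fun h2 => Finset.disjoint_left.mp hdisj hj h2
        have e2 : ∏ j ∈ S₂ᶜ, (if j ∈ S₂ then p else if j ∈ S₁ then 1 - p else 1)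
            = (1 - p) ^ S₁.card := by
          rw [← Finset.prod_sdiff hsub]
          have e3 : ∏ j ∈ S₂ᶜ \ S₁, (if j ∈ S₂ then p else if j ∈ S₁ then 1 - p else 1) = 1 := by
            apply Finset.prod_eq_one
            intro j hj
            rw [Finset.mem_sdiff, Finset.mem_compl] at hj
            rw [if_neg hj.1, if_neg hj.2]
          have e4 : ∏ j ∈ S₁, (if j ∈ S₂ then p else if j ∈ S₁ then 1 - p else 1)
              = (1 - p) ^ S₁.card := by
            have : ∀ j ∈ S₁, (if j ∈ S₂ then p else if j ∈ S₁ then 1 - p else 1) = 1 - p := by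
              intro j hj
              rw [if_neg (fun h2 => Finset.disjoint_left.mp hdisj hj h2), if_pos hj]
            rw [Finset.prod_congr rfl this, Finset.prod_const]
          rw [e3, e4, one_mul]
        rw [e1, e2]

end Counting2

section Counting3

variable {n T : ℕ} (p : ℝ)

noncomputable def matW (M : Fin T → Fin n → Bool) : ℝ := ∏ i, rowW p (M i)

lemma sum_rowW_notok (S₁ S₂ : Finset (Fin n)) :
    ∑ r : Fin n → Bool, (if ¬ RowOK S₁ S₂ r then rowW p r else 0)
      = 1 - ∑ r : Fin n → Bool, (if RowOK S₁ S₂ r then rowW p r else 0) := by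
  have := sum_rowW_total' (n := n) p
  rw [eq_sub_iff_add_eq, ← Finset.sum_add_distrib]
  rw [← this]
  apply Finset.sum_congr rfl
  intro r _
  by_cases hr : RowOK S₁ S₂ r <;> simp [hr]

lemma sum_matW_goodset (S₁ S₂ : Finset (Fin n)) (hdisj : Disjoint S₁ S₂)
    (G : Finset (Fin T)) :
    ∑ M : Fin T → Fin n → Bool,
      (if (∀ i, RowOK S₁ S₂ (M i) ↔ i ∈ G) then matW p M else 0)
      = (p ^ S₂.card * (1 - p) ^ S₁.card) ^ G.card
        * (1 - p ^ S₂.card * (1 - p) ^ S₁.card) ^ (T - G.card) := by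
  set q : ℝ := p ^ S₂.card * (1 - p) ^ S₁.card with hq
  have h := indep_prod (ι := Fin T) (κ := Fin n → Bool)
    (rowW p) (fun i r => RowOK S₁ S₂ r ↔ i ∈ G)
  have hval : ∀ i : Fin T,
      (∑ x ∈ univ.filter (fun r => RowOK S₁ S₂ r ↔ i ∈ G), rowW p x)
        = (if i ∈ G then q else 1 - q) := by
    intro i
    rw [Finset.sum_filter]
    by_cases hi : i ∈ G
    · rw [if_pos hi, hq, ← sum_rowW_ok p S₁ S₂ hdisj]
      apply Finset.sum_congr rfl; intro r _; congr
      · simp [hi]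
    · rw [if_neg hi, hq, ← sum_rowW_ok p S₁ S₂ hdisj, ← sum_rowW_notok p S₁ S₂]
      apply Finset.sum_congr rfl; intro r _; congr
      · simp [hi]
  calc ∑ M : Fin T → Fin n → Bool,
        (if (∀ i, RowOK S₁ S₂ (M i) ↔ i ∈ G) then matW p M else 0)
      = ∑ M : Fin T → Fin n → Bool,
        (if (∀ i, RowOK S₁ S₂ (M i) ↔ i ∈ G) then ∏ i, rowW p (M i) else 0) := rfl
    _ = ∏ i : Fin T, ∑ x ∈ univ.filter (fun r => RowOK S₁ S₂ r ↔ i ∈ G), rowW p x := by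
        rw [← h]; apply Finset.sum_congr rfl; intro M _; congr
    _ = ∏ i : Fin T, (if i ∈ G then q else 1 - q) := Finset.prod_congr rfl (fun i _ => hval i)
    _ = q ^ G.card * (1 - q) ^ (T - G.card) := by
        rw [← Finset.prod_mul_prod_compl G]
        rw [Finset.prod_congr rfl (fun i (hi : i ∈ G) => if_pos hi), Finset.prod_const]
        rw [Finset.prod_congr rfl (fun i (hi : i ∈ Gᶜ) => if_neg (Finset.mem_compl.mp hi)),
          Finset.prod_const]
        congr 2
        rw [Finset.card_compl, Fintype.card_fin]

end Counting3

section Counting4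

variable {n T : ℕ} (p : ℝ)

lemma sum_matW_bad (S₁ S₂ : Finset (Fin n)) (hdisj : Disjoint S₁ S₂) (z : ℕ) :
    ∑ M : Fin T → Fin n → Bool,
      (if (univ.filter (fun i => RowOK S₁ S₂ (M i))).card < z then matW p M else 0)
      = ∑ i ∈ Finset.range z, (T.choose i : ℝ)
          * (p ^ S₂.card * (1 - p) ^ S₁.card) ^ i
          * (1 - p ^ S₂.card * (1 - p) ^ S₁.card) ^ (T - i) := by
  classical
  set q : ℝ := p ^ S₂.card * (1 - p) ^ S₁.card with hq
  set A : Finset (Finset (Fin T)) := univ.filter (fun G => G.card < z) with hA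
  set gs : (Fin T → Fin n → Bool) → Finset (Fin T) :=
    fun M => univ.filter (fun i => RowOK S₁ S₂ (M i)) with hgs
  have step1 : ∑ M : Fin T → Fin n → Bool,
      (if (gs M).card < z then matW p M else 0)
      = ∑ G ∈ A, ∑ M : Fin T → Fin n → Bool, (if gs M = G then matW p M else 0) := by
    rw [Finset.sum_comm]
    apply Finset.sum_congr rfl
    intro M _
    rw [Finset.sum_ite_eq A (gs M) (fun _ => matW p M)]
    by_cases hb : (gs M).card < z
    · rw [if_pos hb, if_pos (by simp [hA, hb])]
    · rw [if_neg hb, if_neg (by simp [hA, hb])]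
  have step2 : ∀ G : Finset (Fin T),
      (∑ M : Fin T → Fin n → Bool, (if gs M = G then matW p M else 0))
        = q ^ G.card * (1 - q) ^ (T - G.card) := by
    intro G
    rw [hq, ← sum_matW_goodset p S₁ S₂ hdisj G]
    apply Finset.sum_congr rfl
    intro M _
    apply if_congr _ rfl rfl
    rw [Finset.ext_iff]
    constructor
    · intro hGG i; rw [← hGG i]; simp [hgs]
    · intro hGG i; rw [← hGG i]; simp [hgs]
  have step3 : A = (Finset.range z).biUnion (fun i => Finset.powersetCard i univ) := by
    ext G
    simp only [hA, Finset.mem_filter, Finset.mem_univ, true_and, Finset.mem_biUnion,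
      Finset.mem_range, Finset.mem_powersetCard_univ]
    constructor
    · intro h; exact ⟨G.card, h, rfl⟩
    · rintro ⟨i, hi, rfl⟩; exact hi
  rw [step1, Finset.sum_congr rfl (fun G _ => step2 G), step3]
  rw [Finset.sum_biUnion]
  · apply Finset.sum_congr rfl
    intro i _
    have : ∀ G ∈ Finset.powersetCard i (univ : Finset (Fin T)),
        q ^ G.card * (1 - q) ^ (T - G.card) = q ^ i * (1 - q) ^ (T - i) := by
      intro G hG
      rw [Finset.mem_powersetCard_univ] at hG
      rw [hG]
    rw [Finset.sum_congr rfl this, Finset.sum_const, Finset.card_powersetCard,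
      Finset.card_univ, Fintype.card_fin, nsmul_eq_mul, mul_assoc]
  · intro x hx y hy hxy
    apply Finset.disjoint_left.mpr
    intro G hGx hGy
    exact hxy ((Finset.mem_powersetCard_univ.mp hGx).symm.trans
      (Finset.mem_powersetCard_univ.mp hGy))

end Counting4

section Numeric

lemma mul_exp_le (y : ℝ) : Real.exp 1 * y ≤ Real.exp y := by
  have h := Real.add_one_le_exp (y - 1)
  have h2 : Real.exp 1 * (y - 1 + 1) ≤ Real.exp 1 * Real.exp (y - 1) := by
    apply mul_le_mul_of_nonneg_left h (Real.exp_pos 1).le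
  rw [← Real.exp_add] at h2
  simpa using h2

lemma succ_pow_le (m : ℕ) : ((m:ℝ) + 1) ^ m ≤ Real.exp 1 * (m:ℝ) ^ m := by
  rcases Nat.eq_zero_or_pos m with h | h
  · subst h; simpa using Real.one_le_exp zero_le_one
  · have hm : (0:ℝ) < m := by exact_mod_cast h
    have h1 : ((m:ℝ) + 1) = m * (1 + 1/m) := by field_simp
    have h2 : (1 + 1/(m:ℝ)) ^ m ≤ Real.exp 1 := by
      have := Real.add_one_le_exp (1/(m:ℝ))
      calc (1 + 1/(m:ℝ)) ^ m ≤ Real.exp (1/(m:ℝ)) ^ m := by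
            apply pow_le_pow_left₀ (by positivity) (by linarith)
        _ = Real.exp ((1/(m:ℝ)) * m) := by rw [← Real.exp_nat_mul]; ring_nf
        _ = Real.exp 1 := by rw [one_div, inv_mul_cancel₀ hm.ne']
    calc ((m:ℝ) + 1) ^ m = (m:ℝ)^m * (1 + 1/m)^m := by rw [h1, mul_pow]
      _ ≤ (m:ℝ)^m * Real.exp 1 := by
          apply mul_le_mul_of_nonneg_left h2 (by positivity)
      _ = Real.exp 1 * (m:ℝ)^m := by ring

lemma pow_self_le_exp_mul_factorial (m : ℕ) :
    (m:ℝ) ^ m ≤ Real.exp 1 ^ m * m.factorial := by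
  induction m with
  | zero => simp
  | succ m ih =>
    have h1 : ((m:ℝ) + 1) ^ (m + 1) = ((m:ℝ) + 1) * ((m:ℝ) + 1) ^ m := by ring
    have h2 : (0:ℝ) ≤ (m:ℝ) + 1 := by positivity
    calc ((m + 1 : ℕ):ℝ) ^ (m+1) = ((m:ℝ) + 1) * ((m:ℝ)+1)^m := by push_cast; ring
      _ ≤ ((m:ℝ) + 1) * (Real.exp 1 * (m:ℝ)^m) := by
          apply mul_le_mul_of_nonneg_left (succ_pow_le m) h2
      _ ≤ ((m:ℝ) + 1) * (Real.exp 1 * (Real.exp 1 ^ m * m.factorial)) := by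
          apply mul_le_mul_of_nonneg_left _ h2
          apply mul_le_mul_of_nonneg_left ih (Real.exp_pos 1).le
      _ = Real.exp 1 ^ (m+1) * (((m:ℝ) + 1) * m.factorial) := by ring
      _ = Real.exp 1 ^ (m+1) * ((m+1).factorial) := by
          rw [Nat.factorial_succ]; push_cast; ring

lemma choose_mul_factorial_le (N j : ℕ) :
    (N.choose j : ℝ) * j.factorial ≤ (N:ℝ) ^ j := by
  have h : N.choose j * j.factorial ≤ N ^ j := by
    rw [mul_comm, ← Nat.descFactorial_eq_factorial_mul_choose]
    exact Nat.descFactorial_le_pow N j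
  exact_mod_cast h

lemma factorial_le_factorial_mul_pow {i m : ℕ} (h : i ≤ m) :
    (m.factorial : ℝ) ≤ i.factorial * (m:ℝ) ^ (m - i) := by
  have hnat : m.factorial ≤ i.factorial * m ^ (m - i) := by
    have e : i.factorial * m.descFactorial (m - i) = m.factorial := by
      have := Nat.factorial_mul_descFactorial (Nat.sub_le m i)
      rwa [Nat.sub_sub_self h] at this
    calc m.factorial = i.factorial * m.descFactorial (m - i) := e.symm
      _ ≤ i.factorial * m ^ (m - i) :=
          Nat.mul_le_mul_left _ (Nat.descFactorial_le_pow m (m-i))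
  exact_mod_cast hnat

end Numeric

section Exist

variable {n T : ℕ}

lemma sum_matW_total (p : ℝ) : ∑ M : Fin T → Fin n → Bool, matW p M = 1 := by
  have h := indep_prod (ι := Fin T) (κ := Fin n → Bool) (rowW p)
    (fun _ _ => True)
  refine Eq.trans ?_ (h.trans ?_)
  · apply Finset.sum_congr rfl; intro M _
    rw [if_pos (fun _ => trivial)]; rfl
  · calc ∏ i : Fin T, ∑ r ∈ univ.filter (fun _ : Fin n → Bool => True), rowW p r
        = ∏ _i : Fin T, ∑ r : Fin n → Bool, rowW p r := by
          apply Finset.prod_congr rfl; intro i _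
          rw [Finset.filter_true]
      _ = 1 := by
          rw [Finset.prod_congr rfl (fun i _ => sum_rowW_total' p), Finset.prod_const_one]

lemma rowW_nonneg {p : ℝ} (hp0 : 0 ≤ p) (hp1 : p ≤ 1) (r : Fin n → Bool) :
    0 ≤ rowW p r := by
  apply Finset.prod_nonneg
  intro j _
  by_cases h : r j <;> simp [h] <;> linarith

lemma matW_nonneg {p : ℝ} (hp0 : 0 ≤ p) (hp1 : p ≤ 1) (M : Fin T → Fin n → Bool) :
    0 ≤ matW p M :=
  Finset.prod_nonneg (fun i _ => rowW_nonneg hp0 hp1 (M i))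

lemma card_filter_card_eq (j : ℕ) :
    ((univ : Finset (Finset (Fin n))).filter (fun S => S.card = j)).card = n.choose j := by
  have e : (univ : Finset (Finset (Fin n))).filter (fun S => S.card = j)
      = Finset.powersetCard j univ := by
    rw [Finset.powersetCard_eq_filter, Finset.powerset_univ]
  rw [e, Finset.card_powersetCard, Finset.card_univ, Fintype.card_fin]

lemma exists_disjunct_of_bound (p : ℝ) (hp0 : 0 ≤ p) (hp1 : p ≤ 1) (d u z : ℕ)
    (hbound : ((n.choose d : ℝ) * (n.choose u : ℝ)) *
      (∑ i ∈ Finset.range z, (T.choose i : ℝ) * (p ^ u * (1 - p) ^ d) ^ i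
        * (1 - p ^ u * (1 - p) ^ d) ^ (T - i)) < 1) :
    ∃ M : Fin T → Fin n → Bool, IsDisjunct M d u z := by
  classical
  by_contra hcon
  push_neg at hcon
  set q : ℝ := p ^ u * (1 - p) ^ d with hqdef
  set tail : ℝ := ∑ i ∈ Finset.range z, (T.choose i : ℝ) * q ^ i * (1 - q) ^ (T - i)
    with htail
  set pairs : Finset (Finset (Fin n) × Finset (Fin n)) :=
    univ.filter (fun P => Disjoint P.1 P.2 ∧ P.1.card = d ∧ P.2.card = u) with hpairs
  have hq0 : 0 ≤ q := by
    apply mul_nonneg (pow_nonneg hp0 u) (pow_nonneg (by linarith) d)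
  have hq1 : q ≤ 1 := by
    have h1 : p ^ u ≤ 1 := pow_le_one₀ hp0 hp1
    have h2 : (1-p) ^ d ≤ 1 := pow_le_one₀ (by linarith) (by linarith)
    have h3 : (0:ℝ) ≤ (1-p)^d := pow_nonneg (by linarith) d
    have h4 : (0:ℝ) ≤ p ^ u := pow_nonneg hp0 u
    nlinarith
  have htail0 : 0 ≤ tail := by
    apply Finset.sum_nonneg
    intro i _
    apply mul_nonneg (mul_nonneg (by positivity) (pow_nonneg hq0 i)) (pow_nonneg (by linarith) _)
  -- each matrix has a bad pair
  have hwit : ∀ M : Fin T → Fin n → Bool, ∃ P ∈ pairs,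
      ((univ.filter (fun i => RowOK P.1 P.2 (M i))).card < z) := by
    intro M
    have := hcon M
    unfold IsDisjunct at this
    push_neg at this
    obtain ⟨S₁, S₂, hd, hc1, hc2, hlt⟩ := this
    refine ⟨(S₁, S₂), by simp [hpairs, hd, hc1, hc2], ?_⟩
    have : (univ.filter (fun i => RowOK S₁ S₂ (M i)))
        = (univ.filter (fun i => (∀ j ∈ S₂, M i j = true) ∧ (∀ j ∈ S₁, M i j = false))) := by
      apply Finset.filter_congr_decidable
    rw [this]
    exact hlt
  have key : (1:ℝ) ≤ ∑ P ∈ pairs, ∑ M : Fin T → Fin n → Bool,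
      (if (univ.filter (fun i => RowOK P.1 P.2 (M i))).card < z then matW p M else 0) := by
    rw [Finset.sum_comm]
    calc (1:ℝ) = ∑ M : Fin T → Fin n → Bool, matW p M := (sum_matW_total p).symm
      _ ≤ ∑ M : Fin T → Fin n → Bool, ∑ P ∈ pairs,
          (if (univ.filter (fun i => RowOK P.1 P.2 (M i))).card < z then matW p M else 0) := by
          apply Finset.sum_le_sum
          intro M _
          obtain ⟨P, hP, hPbad⟩ := hwit M
          calc matW p M
              = (if (univ.filter (fun i => RowOK P.1 P.2 (M i))).card < z
                  then matW p M else 0) := by rw [if_pos hPbad]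
            _ ≤ _ := by
                apply Finset.single_le_sum _ hP
                intro Q _
                by_cases hb : (univ.filter (fun i => RowOK Q.1 Q.2 (M i))).card < z
                · rw [if_pos hb]; exact matW_nonneg hp0 hp1 M
                · rw [if_neg hb]
  have heach : ∀ P ∈ pairs, (∑ M : Fin T → Fin n → Bool,
      (if (univ.filter (fun i => RowOK P.1 P.2 (M i))).card < z then matW p M else 0)) = tail := by
    intro P hP
    rw [hpairs, Finset.mem_filter] at hP
    obtain ⟨-, hd, hc1, hc2⟩ := hP
    rw [sum_matW_bad p P.1 P.2 hd z, htail, hqdef, hc1, hc2]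
  have hcard : (pairs.card : ℝ) ≤ (n.choose d : ℝ) * (n.choose u : ℝ) := by
    have hsub : pairs ⊆ (univ.filter (fun S : Finset (Fin n) => S.card = d)) ×ˢ
        (univ.filter (fun S : Finset (Fin n) => S.card = u)) := by
      intro P hP
      rw [hpairs, Finset.mem_filter] at hP
      rw [Finset.mem_product, Finset.mem_filter, Finset.mem_filter]
      exact ⟨⟨Finset.mem_univ _, hP.2.2.1⟩, Finset.mem_univ _, hP.2.2.2⟩
    have := Finset.card_le_card hsub
    rw [Finset.card_product, card_filter_card_eq, card_filter_card_eq] at this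
    exact_mod_cast this
  have : (1:ℝ) ≤ ((n.choose d : ℝ) * (n.choose u : ℝ)) * tail := by
    calc (1:ℝ) ≤ _ := key
      _ = ∑ _P ∈ pairs, tail := Finset.sum_congr rfl heach
      _ = pairs.card * tail := by rw [Finset.sum_const, nsmul_eq_mul]
      _ ≤ ((n.choose d : ℝ) * (n.choose u : ℝ)) * tail :=
          mul_le_mul_of_nonneg_right hcard htail0
  linarith

end Exist

section Numeric2

lemma one_sub_le_exp_neg (q : ℝ) : 1 - q ≤ Real.exp (-q) := by
  have := Real.add_one_le_exp (-q)
  linarith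

lemma tail_le_exp (q : ℝ) (hq0 : 0 ≤ q) (hq1 : q ≤ 1) (T z : ℕ) (hz : 1 ≤ z)
    (hXz : (z:ℝ) - 1 ≤ (T:ℝ)*q) :
    ∑ i ∈ Finset.range z, (T.choose i:ℝ) * q^i * (1-q)^(T-i)
      ≤ z * (((T:ℝ)*q)^(z-1) / (z-1).factorial) * Real.exp (-((T:ℝ)*q) + z) := by
  set X : ℝ := (T:ℝ) * q with hX
  have hX0 : 0 ≤ X := mul_nonneg (Nat.cast_nonneg T) hq0
  have hzr : (0:ℝ) ≤ (z:ℝ) - 1 := by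
    have : (1:ℝ) ≤ z := by exact_mod_cast hz
    linarith
  have hterm : ∀ i ∈ Finset.range z,
      (T.choose i:ℝ) * q^i * (1-q)^(T-i)
        ≤ (X^(z-1) / (z-1).factorial) * Real.exp (-X + z) := by
    intro i hi
    rw [Finset.mem_range] at hi
    have hi1 : i ≤ z - 1 := Nat.le_sub_one_of_lt hi
    have h1 : (T.choose i:ℝ) * q^i ≤ X^i / i.factorial := by
      rw [le_div_iff₀ (by positivity : (0:ℝ) < i.factorial), hX, mul_pow]
      calc (T.choose i:ℝ) * q^i * i.factorial
          = ((T.choose i:ℝ) * i.factorial) * q^i := by ring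
        _ ≤ (T:ℝ)^i * q^i := by
            apply mul_le_mul_of_nonneg_right (choose_mul_factorial_le T i)
              (pow_nonneg hq0 i)
    have h2 : (1-q)^(T-i) ≤ Real.exp (-X + z) := by
      calc (1-q)^(T-i) ≤ Real.exp (-q) ^ (T-i) := by
            apply pow_le_pow_left₀ (by linarith) (one_sub_le_exp_neg q)
        _ = Real.exp (-q * (T-i : ℕ)) := by
            rw [← Real.exp_nat_mul]; ring_nf
        _ ≤ Real.exp (-X + z) := by
            apply Real.exp_le_exp.mpr
            have hcast : (T:ℝ) - i ≤ ((T - i : ℕ):ℝ) := by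
              rcases le_or_gt i T with h | h
              · rw [Nat.cast_sub h]
              · have h0 : T - i = 0 := Nat.sub_eq_zero_of_le h.le
                have : (T:ℝ) < i := by exact_mod_cast h
                rw [h0]; push_cast; linarith
            have hiz : (i:ℝ) ≤ z := by
              have : i ≤ z := hi.le
              exact_mod_cast this
            have hTi : (0:ℝ) ≤ ((T - i : ℕ):ℝ) := Nat.cast_nonneg _
            nlinarith
    have hfac : ((z-1).factorial : ℝ) ≤ i.factorial * ((z:ℝ)-1)^(z-1-i) := by
      have h := factorial_le_factorial_mul_pow hi1
      rwa [Nat.cast_sub hz, Nat.cast_one] at h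
    have h3 : X^i / i.factorial ≤ X^(z-1) / (z-1).factorial := by
      rw [div_le_div_iff₀ (by exact_mod_cast i.factorial_pos)
        (by exact_mod_cast (z-1).factorial_pos)]
      have hpow : ((z:ℝ)-1)^(z-1-i) ≤ X^(z-1-i) := pow_le_pow_left₀ hzr hXz _
      have hXsplit : X^i * X^(z-1-i) = X^(z-1) := by
        rw [← pow_add, Nat.add_sub_cancel' hi1]
      calc X^i * (z-1).factorial
          ≤ X^i * (i.factorial * ((z:ℝ)-1)^(z-1-i)) :=
            mul_le_mul_of_nonneg_left hfac (pow_nonneg hX0 i)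
        _ ≤ X^i * (i.factorial * X^(z-1-i)) := by
            apply mul_le_mul_of_nonneg_left _ (pow_nonneg hX0 i)
            apply mul_le_mul_of_nonneg_left hpow (by positivity)
        _ = (X^i * X^(z-1-i)) * i.factorial := by ring
        _ = X^(z-1) * i.factorial := by rw [hXsplit]
    calc (T.choose i:ℝ) * q^i * (1-q)^(T-i)
        ≤ (X^i / i.factorial) * Real.exp (-X + z) := by
          apply mul_le_mul h1 h2 (pow_nonneg (by linarith) _)
            (div_nonneg (pow_nonneg hX0 i) (Nat.cast_nonneg _))
      _ ≤ (X^(z-1) / (z-1).factorial) * Real.exp (-X + z) := by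
          apply mul_le_mul_of_nonneg_right h3 (Real.exp_pos _).le
  calc ∑ i ∈ Finset.range z, (T.choose i:ℝ) * q^i * (1-q)^(T-i)
      ≤ ∑ _i ∈ Finset.range z, (X^(z-1) / (z-1).factorial) * Real.exp (-X + z) :=
        Finset.sum_le_sum hterm
    _ = z * (X^(z-1) / (z-1).factorial) * Real.exp (-X + z) := by
        rw [Finset.sum_const, Finset.card_range, nsmul_eq_mul]; ring

end Numeric2

section Numeric3

lemma sq_exp_mul_le (y : ℝ) : Real.exp 1 ^ 2 * y ≤ Real.exp (y + 1) := by
  have h1 : Real.exp 1 * y ≤ Real.exp y := mul_exp_le y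
  have h2 : Real.exp 1 * (Real.exp 1 * y) ≤ Real.exp 1 * Real.exp y :=
    mul_le_mul_of_nonneg_left h1 (Real.exp_pos 1).le
  calc Real.exp 1 ^ 2 * y = Real.exp 1 * (Real.exp 1 * y) := by ring
    _ ≤ Real.exp 1 * Real.exp y := h2
    _ = Real.exp (y + 1) := by rw [← Real.exp_add]; ring_nf

lemma pow_div_factorial_le_exp (X : ℝ) (hX : 0 ≤ X) (m : ℕ) :
    X ^ m / m.factorial ≤ Real.exp (X / Real.exp 1 ^ 2 + 2 * m) := by
  rcases Nat.eq_zero_or_pos m with hm | hm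
  · subst hm
    simp only [pow_zero, Nat.factorial_zero, Nat.cast_one, div_one, Nat.cast_zero, mul_zero,
      add_zero]
    rw [show (1:ℝ) = Real.exp 0 from (Real.exp_zero).symm]
    apply Real.exp_le_exp.mpr
    positivity
  · have hm0 : (0:ℝ) < m := by exact_mod_cast hm
    have key : X / m ≤ Real.exp (X / (m * Real.exp 1 ^ 2) + 1) := by
      have := sq_exp_mul_le (X / (m * Real.exp 1 ^ 2))
      have e : Real.exp 1 ^ 2 * (X / (m * Real.exp 1 ^ 2)) = X / m := by
        field_simp
      linarith [e ▸ this]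
    have hXm : X ^ m ≤ Real.exp (X / Real.exp 1 ^ 2 + m) * (m:ℝ)^m := by
      have h1 : (X / m) ^ m ≤ Real.exp (X / (m * Real.exp 1 ^ 2) + 1) ^ m :=
        pow_le_pow_left₀ (by positivity) key m
      have h2 : Real.exp (X / (m * Real.exp 1 ^ 2) + 1) ^ m
          = Real.exp ((X / (m * Real.exp 1 ^ 2) + 1) * m) := by
        rw [← Real.exp_nat_mul]; ring_nf
      have h3 : (X / (m * Real.exp 1 ^ 2) + 1) * m = X / Real.exp 1 ^ 2 + m := by
        field_simp
      have h4 : (X/m)^m * (m:ℝ)^m = X^m := by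
        rw [div_pow]; field_simp
      calc X ^ m = (X/m)^m * (m:ℝ)^m := h4.symm
        _ ≤ Real.exp (X / (m * Real.exp 1 ^ 2) + 1) ^ m * (m:ℝ)^m := by
            apply mul_le_mul_of_nonneg_right h1 (by positivity)
        _ = Real.exp (X / Real.exp 1 ^ 2 + m) * (m:ℝ)^m := by rw [h2, h3]
    have hmm : (m:ℝ)^m ≤ Real.exp 1 ^ m * m.factorial := pow_self_le_exp_mul_factorial m
    rw [div_le_iff₀ (by exact_mod_cast m.factorial_pos)]
    calc X ^ m ≤ Real.exp (X / Real.exp 1 ^ 2 + m) * (m:ℝ)^m := hXm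
      _ ≤ Real.exp (X / Real.exp 1 ^ 2 + m) * (Real.exp 1 ^ m * m.factorial) := by
          apply mul_le_mul_of_nonneg_left hmm (Real.exp_pos _).le
      _ = (Real.exp (X / Real.exp 1 ^ 2 + m) * Real.exp 1 ^ m) * m.factorial := by ring
      _ = Real.exp (X / Real.exp 1 ^ 2 + 2 * m) * m.factorial := by
          rw [show Real.exp 1 ^ m = Real.exp m by rw [← Real.exp_nat_mul, mul_one],
            ← Real.exp_add]
          ring_nf

end Numeric3

section Numeric4

lemma choose_le_exp (N j : ℕ) (hj : 1 ≤ j) (hN : 1 ≤ N) :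
    (N.choose j : ℝ) ≤ Real.exp ((j:ℝ) * Real.log (Real.exp 1 * N / j)) := by
  have hj0 : (0:ℝ) < j := by exact_mod_cast hj
  have hN0 : (0:ℝ) < N := by exact_mod_cast hN
  have hpos : (0:ℝ) < Real.exp 1 * N / j := by positivity
  have h1 : (N.choose j : ℝ) * j.factorial ≤ (N:ℝ)^j := choose_mul_factorial_le N j
  have h2 : (j:ℝ)^j ≤ Real.exp 1 ^ j * j.factorial := pow_self_le_exp_mul_factorial j
  have hfac : (0:ℝ) < j.factorial := by exact_mod_cast j.factorial_pos
  have h3 : (N.choose j : ℝ) ≤ (Real.exp 1 * N / j)^j := by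
    rw [div_pow, mul_pow, le_div_iff₀ (by positivity)]
    calc (N.choose j:ℝ) * (j:ℝ)^j ≤ (N.choose j:ℝ) * (Real.exp 1 ^ j * j.factorial) := by
          apply mul_le_mul_of_nonneg_left h2 (Nat.cast_nonneg _)
      _ = ((N.choose j:ℝ) * j.factorial) * Real.exp 1 ^ j := by ring
      _ ≤ (N:ℝ)^j * Real.exp 1 ^ j := by
          apply mul_le_mul_of_nonneg_right h1 (by positivity)
      _ = Real.exp 1 ^ j * (N:ℝ)^j := by ring
  calc (N.choose j : ℝ) ≤ (Real.exp 1 * N / j)^j := h3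
    _ = Real.exp ((j:ℝ) * Real.log (Real.exp 1 * N / j)) := by
        rw [← Real.exp_log hpos, ← Real.exp_nat_mul]
        rw [Real.log_exp]

end Numeric4

set_option maxHeartbeats 1000000 in
theorem exists_disjunct_matrix_improved
    (d u z n : ℕ) (hu : 2 ≤ u) (hud : u ≤ d) (hkn : d + u ≤ n)
    (hn : ((d : ℝ) + u) ^ 2 / u ≤ n) (hz : 0 < z) :
    ∃ (h : ℕ) (M : Fin h → Fin n → Bool), IsDisjunct M d u z ∧
      (h : ℝ) ≤ 3 * (1 + 4 * (z : ℝ) / (3 * alphaTGT n d u)) *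
        (((d : ℝ) + u) / u) ^ u * (((d : ℝ) + u) / d) ^ d * alphaTGT n d u := by
  classical
  have hd2 : 2 ≤ d := le_trans hu hud
  have hur : (2:ℝ) ≤ u := by exact_mod_cast hu
  have hdr : (2:ℝ) ≤ d := by exact_mod_cast hd2
  have hu0 : (0:ℝ) < u := by linarith
  have hd0 : (0:ℝ) < d := by linarith
  have hudr : (u:ℝ) ≤ d := by exact_mod_cast hud
  set K : ℝ := (d:ℝ) + u with hK
  have hK0 : (0:ℝ) < K := by rw [hK]; linarith
  have hnr : K ≤ n := by
    rw [hK]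
    have : ((d + u : ℕ) : ℝ) ≤ n := by exact_mod_cast hkn
    push_cast at this
    linarith
  have hn0 : (0:ℝ) < n := lt_of_lt_of_le (by linarith) hnr
  set α : ℝ := alphaTGT n d u with hα
  -- log expansions
  have hlog1 : Real.log (Real.exp 1 * n / K) = 1 + Real.log n - Real.log K := by
    rw [Real.log_div (by positivity) (ne_of_gt hK0),
      Real.log_mul (Real.exp_pos 1).ne' (ne_of_gt hn0), Real.log_exp]
  have hlog2 : Real.log (Real.exp 1 * K / u) = 1 + Real.log K - Real.log u := by
    rw [Real.log_div (by positivity) (ne_of_gt hu0),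
      Real.log_mul (Real.exp_pos 1).ne' (ne_of_gt hK0), Real.log_exp]
  have expand : α = K * (1 + Real.log n - Real.log K) + u * (1 + Real.log K - Real.log u) := by
    rw [hα, alphaTGT, ← hK, hlog1, hlog2]
  have hlognK : Real.log K ≤ Real.log n := Real.log_le_log hK0 hnr
  have hloguK : Real.log u ≤ Real.log K := Real.log_le_log hu0 (by rw [hK]; linarith)
  have halpha : 0 < α := by
    have t1 : K * 1 ≤ K * (1 + Real.log n - Real.log K) :=
      mul_le_mul_of_nonneg_left (by linarith) hK0.le
    have t2 : (u:ℝ) * 1 ≤ u * (1 + Real.log K - Real.log u) :=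
      mul_le_mul_of_nonneg_left (by linarith) hu0.le
    rw [expand]
    nlinarith [t1, t2]
  -- parameters
  set pr : ℝ := u / K with hpr
  have hp0 : 0 ≤ pr := by rw [hpr]; positivity
  have hp1 : pr ≤ 1 := by
    rw [hpr, div_le_one hK0, hK]; linarith
  have h1p : 1 - pr = (d:ℝ) / K := by
    rw [hpr, eq_div_iff (ne_of_gt hK0)]
    field_simp
    rw [hK]; ring
  set q : ℝ := pr ^ u * (1 - pr) ^ d with hq
  set B : ℝ := (K/u)^u * (K/d)^d with hB
  have hq0 : 0 < q := by
    rw [hq, h1p, hpr]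
    have := div_pos hu0 hK0
    have := div_pos hd0 hK0
    positivity
  have hq1 : q ≤ 1 := by
    rw [hq]
    have h1 : pr ^ u ≤ 1 := pow_le_one₀ hp0 hp1
    have h2 : (1-pr) ^ d ≤ 1 := pow_le_one₀ (by linarith) (by linarith)
    have h3 : (0:ℝ) ≤ (1-pr)^d := pow_nonneg (by linarith) d
    have h4 : (0:ℝ) ≤ pr ^ u := pow_nonneg hp0 u
    nlinarith
  have hB0 : 0 < B := by
    rw [hB]
    have := div_pos hK0 hu0
    have := div_pos hK0 hd0
    positivity
  have hqB : q * B = 1 := by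
    rw [hq, hB, h1p, hpr]
    rw [show (u/K)^u * ((d:ℝ)/K)^d * ((K/u)^u * (K/d)^d)
        = ((u/K) * (K/u))^u * (((d:ℝ)/K) * (K/d))^d by rw [mul_pow, mul_pow]; ring]
    rw [div_mul_div_comm, div_mul_div_comm]
    rw [show (u:ℝ) * K / (K * u) = 1 by field_simp,
      show (d:ℝ) * K / (K * d) = 1 by field_simp]
    norm_num
  set Q : ℝ := 3 * α + 4 * z with hQ
  have hz1 : (1:ℝ) ≤ z := by exact_mod_cast hz
  have hQ0 : 0 < Q := by rw [hQ]; linarith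
  set T : ℕ := ⌊Q * B⌋₊ with hT
  have hQB0 : 0 ≤ Q * B := le_of_lt (mul_pos hQ0 hB0)
  have hTle : (T:ℝ) ≤ Q * B := Nat.floor_le hQB0
  have hTgt : Q * B - 1 < (T:ℝ) := Nat.sub_one_lt_floor _
  -- X bounds
  set X : ℝ := (T:ℝ) * q with hX
  have hX0 : 0 ≤ X := mul_nonneg (Nat.cast_nonneg T) hq0.le
  have hXleQ : X ≤ Q := by
    calc X ≤ (Q * B) * q := mul_le_mul_of_nonneg_right hTle hq0.le
      _ = Q * (q * B) := by ring
      _ = Q := by rw [hqB, mul_one]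
  have hXgtQ : Q - q < X := by
    have h1 : (Q * B - 1) * q < X := by
      rw [hX]
      exact mul_lt_mul_of_pos_right hTgt hq0
    have h3 : Q * B * q = Q := by rw [mul_assoc, mul_comm B q, hqB, mul_one]
    have h2 : (Q * B - 1) * q = Q - q := by linarith [h3, sub_mul (Q*B) 1 q]
    linarith
  have hXgt : Q - 1 < X := by linarith
  have hXz : (z:ℝ) - 1 ≤ X := by
    have : (z:ℝ) ≤ Q - 1 := by rw [hQ]; linarith
    linarith
  -- final bound hypothesis for the probabilistic lemma
  have he2 : (7:ℝ) ≤ Real.exp 1 ^ 2 := by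
    have h := Real.exp_one_gt_d9
    nlinarith
  have he20 : (0:ℝ) < Real.exp 1 ^ 2 := by positivity
  have hczm : ((z - 1 : ℕ):ℝ) = (z:ℝ) - 1 := by
    rw [Nat.cast_sub hz, Nat.cast_one]
  have hbound : ((n.choose d : ℝ) * (n.choose u : ℝ)) *
      (∑ i ∈ Finset.range z, (T.choose i : ℝ) * (pr ^ u * (1 - pr) ^ d) ^ i
        * (1 - pr ^ u * (1 - pr) ^ d) ^ (T - i)) < 1 := by
    rw [← hq]
    have htail := tail_le_exp q hq0.le hq1 T z hz hXz
    rw [← hX] at htail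
    have htail0 : 0 ≤ ∑ i ∈ Finset.range z, (T.choose i : ℝ) * q ^ i * (1 - q) ^ (T - i) := by
      apply Finset.sum_nonneg
      intro i _
      apply mul_nonneg (mul_nonneg (Nat.cast_nonneg _) (pow_nonneg hq0.le i))
        (pow_nonneg (by linarith) _)
    -- pair count
    have hc1 : (n.choose d : ℝ) ≤ Real.exp ((d:ℝ) * Real.log (Real.exp 1 * n / d)) :=
      choose_le_exp n d (by omega) (by omega)
    have hc2 : (n.choose u : ℝ) ≤ Real.exp ((u:ℝ) * Real.log (Real.exp 1 * n / u)) :=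
      choose_le_exp n u (by omega) (by omega)
    have hNp : (n.choose d : ℝ) * (n.choose u : ℝ) ≤ Real.exp α := by
      have hmul : (n.choose d : ℝ) * (n.choose u : ℝ)
          ≤ Real.exp ((d:ℝ) * Real.log (Real.exp 1 * n / d)
              + (u:ℝ) * Real.log (Real.exp 1 * n / u)) := by
        rw [Real.exp_add]
        exact mul_le_mul hc1 hc2 (Nat.cast_nonneg _) (Real.exp_pos _).le
      apply le_trans hmul
      apply Real.exp_le_exp.mpr
      have hlogd : Real.log (Real.exp 1 * n / d) = 1 + Real.log n - Real.log d := by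
        rw [Real.log_div (by positivity) (ne_of_gt hd0),
          Real.log_mul (Real.exp_pos 1).ne' (ne_of_gt hn0), Real.log_exp]
      have hlogu : Real.log (Real.exp 1 * n / u) = 1 + Real.log n - Real.log u := by
        rw [Real.log_div (by positivity) (ne_of_gt hu0),
          Real.log_mul (Real.exp_pos 1).ne' (ne_of_gt hn0), Real.log_exp]
      have hKd : (d:ℝ) * (Real.log K - Real.log d) ≤ u := by
        have h1 : Real.log (K / d) ≤ K / d - 1 := Real.log_le_sub_one_of_pos (div_pos hK0 hd0)
        have h2 : Real.log (K / d) = Real.log K - Real.log d :=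
          Real.log_div (ne_of_gt hK0) (ne_of_gt hd0)
        have h3 : K / d - 1 = (u:ℝ) / d := by
          rw [hK]; field_simp; ring
        rw [h2, h3] at h1
        have h4 : (d:ℝ) * (Real.log K - Real.log d) ≤ (d:ℝ) * ((u:ℝ)/d) :=
          mul_le_mul_of_nonneg_left h1 hd0.le
        rw [mul_div_cancel₀ _ (ne_of_gt hd0)] at h4
        exact h4
      rw [hK] at hKd
      rw [hlogd, hlogu, expand, hK]
      linarith [hKd]
    -- exp bounds on the tail
    have hzb : (z:ℝ) ≤ Real.exp ((z:ℝ) / Real.exp 1 ^ 2 + 1) := by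
      have := sq_exp_mul_le ((z:ℝ) / Real.exp 1 ^ 2)
      have e : Real.exp 1 ^ 2 * ((z:ℝ) / Real.exp 1 ^ 2) = z := by
        field_simp
      linarith [e ▸ this]
    have hpf : X ^ (z-1) / (z-1).factorial
        ≤ Real.exp (X / Real.exp 1 ^ 2 + 2 * ((z - 1 : ℕ):ℝ)) :=
      pow_div_factorial_le_exp X hX0 (z-1)
    have hexp0 : (0:ℝ) ≤ X ^ (z-1) / (z-1).factorial :=
      div_nonneg (pow_nonneg hX0 _) (Nat.cast_nonneg _)
    have htail2 : ∑ i ∈ Finset.range z, (T.choose i : ℝ) * q ^ i * (1 - q) ^ (T - i)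
        ≤ Real.exp ((z:ℝ) / Real.exp 1 ^ 2 + 1)
          * Real.exp (X / Real.exp 1 ^ 2 + 2 * ((z:ℝ) - 1))
          * Real.exp (-X + z) := by
      apply le_trans htail
      rw [← hczm]
      apply mul_le_mul_of_nonneg_right _ (Real.exp_pos _).le
      apply mul_le_mul hzb hpf hexp0 (Real.exp_pos _).le
    -- combine
    set E : ℝ := α + ((z:ℝ) / Real.exp 1 ^ 2 + 1) + (X / Real.exp 1 ^ 2 + 2 * ((z:ℝ) - 1))
      + (-X + z) with hE
    have hEneg : E < 0 := by
      have hdiv1 : (z:ℝ) / Real.exp 1 ^ 2 ≤ (z:ℝ) / 7 :=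
        div_le_div_of_nonneg_left (by linarith) (by norm_num) he2
      have hdiv2 : X / Real.exp 1 ^ 2 ≤ X / 7 :=
        div_le_div_of_nonneg_left hX0 (by norm_num) he2
      rw [hE]
      have hQval : Q = 3 * α + 4 * z := hQ
      linarith
    calc ((n.choose d : ℝ) * (n.choose u : ℝ)) *
          (∑ i ∈ Finset.range z, (T.choose i : ℝ) * q ^ i * (1 - q) ^ (T - i))
        ≤ Real.exp α * (Real.exp ((z:ℝ) / Real.exp 1 ^ 2 + 1)
            * Real.exp (X / Real.exp 1 ^ 2 + 2 * ((z:ℝ) - 1)) * Real.exp (-X + z)) := by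
          apply mul_le_mul hNp htail2 htail0 (Real.exp_pos _).le
      _ = Real.exp E := by
          rw [hE, ← Real.exp_add, ← Real.exp_add, ← Real.exp_add]
          congr 1
          ring
      _ < 1 := Real.exp_lt_one_iff.mpr hEneg
  obtain ⟨M, hM⟩ := exists_disjunct_of_bound (T := T) (n := n) pr hp0 hp1 d u z hbound
  refine ⟨T, M, hM, ?_⟩
  have hRHSeq : 3 * (1 + 4 * (z:ℝ) / (3 * α)) * (K/u)^u * (K/d)^d * α = Q * B := by
    rw [hQ, hB]
    field_simp
  calc (T:ℝ) ≤ Q * B := hTle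
    _ = 3 * (1 + 4 * (z:ℝ) / (3 * α)) * (K/u)^u * (K/d)^d * α := hRHSeq.symm
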